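/- Let d ≥ 1, n ≥ 1, and let A be a d × d real symmetric positive definite matrix. For every d × d real symmetric positive definite matrix Σ, det(Σ)^(−n/2) * exp(−(1/2) trace(Σ⁻¹ A)) ≤ n^(nd/2) * det(A)^(−n/2) * exp(−nd/2), with equality if and only if Σ = (1/n) A. Consequently, sup over symmetric positive definite Σ of det(Σ)^(−n/2) * exp(−(1/2) trace(Σ⁻¹ A)) equals n^(nd/2) * det(A)^(−n/2) * exp(−nd/2), attained uniquely at Σ = A/n. -/

import Mathlib

open Matrix Set

private lemma scalar_lt (n : ℕ) (hn : 1 ≤ n) {x : ℝ} (hx : 0 < x) (hxn : x ≠ (n:ℝ)) :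
    (n:ℝ)/2 * Real.log x - x/2 < (n:ℝ)/2 * Real.log n - (n:ℝ)/2 := by
  have hn0 : (0:ℝ) < n := by exact_mod_cast hn
  have ht : (0:ℝ) < x / n := div_pos hx hn0
  have h1 : Real.log (x / n) < x / n - 1 :=
    Real.log_lt_sub_one_of_pos ht (fun h => hxn (by field_simp at h; exact h))
  rw [Real.log_div hx.ne' hn0.ne'] at h1
  have h2 : (n:ℝ)/2 * (Real.log x - Real.log n) < (n:ℝ)/2 * (x/n - 1) :=
    mul_lt_mul_of_pos_left h1 (by positivity)
  have h3 : (n:ℝ)/2 * (x/n - 1) = x/2 - (n:ℝ)/2 := by field_simp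
  linarith

private lemma scalar_le (n : ℕ) (hn : 1 ≤ n) {x : ℝ} (hx : 0 < x) :
    (n:ℝ)/2 * Real.log x - x/2 ≤ (n:ℝ)/2 * Real.log n - (n:ℝ)/2 := by
  rcases eq_or_ne x (n:ℝ) with h | h
  · rw [h]
  · exact (scalar_lt n hn hx h).le

private lemma trace_eq_sum_eig {d : ℕ} {B : Matrix (Fin d) (Fin d) ℝ} (hB : B.IsHermitian) :
    B.trace = ∑ i, hB.eigenvalues i := by
  conv_lhs => rw [hB.spectral_theorem, Unitary.conjStarAlgAut_apply]
  rw [Matrix.trace_mul_cycle]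
  have h1 : (star (hB.eigenvectorUnitary : Matrix (Fin d) (Fin d) ℝ)) *
      (hB.eigenvectorUnitary : Matrix (Fin d) (Fin d) ℝ) = 1 :=
    (Unitary.mem_iff.mp hB.eigenvectorUnitary.prop).1
  rw [h1, Matrix.one_mul, Matrix.trace_diagonal]
  simp

private lemma det_eq_prod_eig {d : ℕ} {B : Matrix (Fin d) (Fin d) ℝ} (hB : B.IsHermitian) :
    B.det = ∏ i, hB.eigenvalues i := by
  rw [hB.det_eq_prod_eigenvalues]; simp

private lemma matrix_log_ineq (d n : ℕ) (hn : 1 ≤ n) {B : Matrix (Fin d) (Fin d) ℝ}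
    (hB : B.PosSemidef) (hdet : 0 < B.det) :
    ((n:ℝ)/2 * Real.log B.det - B.trace/2 ≤ (d:ℝ) * ((n:ℝ)/2 * Real.log n - (n:ℝ)/2)) ∧
    ((n:ℝ)/2 * Real.log B.det - B.trace/2 = (d:ℝ) * ((n:ℝ)/2 * Real.log n - (n:ℝ)/2) ↔
      B = (n:ℝ) • 1) := by
  set μ := hB.1.eigenvalues with hμ
  have hprod : B.det = ∏ i, μ i := det_eq_prod_eig hB.1
  have hμpos : ∀ i, 0 < μ i := by
    intro i
    rcases (hB.eigenvalues_nonneg i).lt_or_eq with h | h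
    · exact h
    · exfalso
      have : B.det = 0 := by
        rw [hprod]
        exact Finset.prod_eq_zero (Finset.mem_univ i) h.symm
      exact hdet.ne' this
  have hlog : Real.log B.det = ∑ i, Real.log (μ i) := by
    rw [hprod, Real.log_prod (fun i _ => (hμpos i).ne')]
  have htr : B.trace = ∑ i, μ i := trace_eq_sum_eig hB.1
  have hLHS : (n:ℝ)/2 * Real.log B.det - B.trace/2
      = ∑ i, ((n:ℝ)/2 * Real.log (μ i) - μ i / 2) := by
    rw [hlog, htr, Finset.mul_sum, Finset.sum_div, ← Finset.sum_sub_distrib]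
  have hRHS : (d:ℝ) * ((n:ℝ)/2 * Real.log n - (n:ℝ)/2)
      = ∑ _i : Fin d, ((n:ℝ)/2 * Real.log n - (n:ℝ)/2) := by
    rw [Finset.sum_const, Finset.card_fin, nsmul_eq_mul]
  have hle : ∀ i ∈ Finset.univ, (n:ℝ)/2 * Real.log (μ i) - μ i / 2
      ≤ (n:ℝ)/2 * Real.log n - (n:ℝ)/2 := fun i _ => scalar_le n hn (hμpos i)
  constructor
  · rw [hLHS, hRHS]
    exact Finset.sum_le_sum hle
  · constructor
    · intro heq
      rw [hLHS, hRHS] at heq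
      have hall := (Finset.sum_eq_sum_iff_of_le hle).mp heq
      have hμn : ∀ i, μ i = (n:ℝ) := by
        intro i
        by_contra h
        exact absurd (hall i (Finset.mem_univ i)) (scalar_lt n hn (hμpos i) h).ne
      have hdiag : Matrix.diagonal (RCLike.ofReal ∘ μ) = ((n:ℝ) • 1 : Matrix (Fin d) (Fin d) ℝ) := by
        ext i j
        by_cases hij : i = j <;> simp [Matrix.diagonal, hij, hμn, Matrix.one_apply]
      have h1 : (hB.1.eigenvectorUnitary : Matrix (Fin d) (Fin d) ℝ) *
          (star (hB.1.eigenvectorUnitary : Matrix (Fin d) (Fin d) ℝ)) = 1 :=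
        (Unitary.mem_iff.mp hB.1.eigenvectorUnitary.prop).2
      calc B = (hB.1.eigenvectorUnitary : Matrix (Fin d) (Fin d) ℝ) *
            Matrix.diagonal (RCLike.ofReal ∘ μ) *
            (star (hB.1.eigenvectorUnitary : Matrix (Fin d) (Fin d) ℝ)) := hB.1.spectral_theorem
        _ = (n:ℝ) • ((hB.1.eigenvectorUnitary : Matrix (Fin d) (Fin d) ℝ) *
            (star (hB.1.eigenvectorUnitary : Matrix (Fin d) (Fin d) ℝ))) := by
            rw [hdiag]; rw [Matrix.mul_smul, Matrix.smul_mul, Matrix.mul_one]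
        _ = (n:ℝ) • 1 := by rw [h1]
    · intro hBn
      have hd : B.det = (n:ℝ)^d := by
        rw [hBn, Matrix.det_smul, Matrix.det_one, mul_one]; simp
      have ht : B.trace = (n:ℝ) * d := by
        rw [hBn, Matrix.trace_smul, Matrix.trace_one]; simp [mul_comm]
      rw [hd, ht, Real.log_pow]
      ring

private lemma posDef_smul' {d : ℕ} {A : Matrix (Fin d) (Fin d) ℝ} (hA : A.PosDef) {c : ℝ}
    (hc : 0 < c) : (c • A).PosDef := by
  refine ⟨?_, ?_⟩
  · show (c • A)ᴴ = c • A
    rw [Matrix.conjTranspose_smul, hA.1.eq, star_trivial]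
  · exact (hA.smul hc).2

/-- For `d, n ≥ 1` and a `d × d` real symmetric positive definite `A`,
for every symmetric positive definite `Σ`,
`det(Σ)^(-n/2) exp(-(1/2) tr(Σ⁻¹ A)) ≤ n^(nd/2) det(A)^(-n/2) e^(-nd/2)`,
with equality iff `Σ = A/n`; consequently the supremum over the positive definite cone
equals `n^(nd/2) det(A)^(-n/2) e^(-nd/2)`, attained uniquely at `Σ = A/n`. -/
theorem multivariate_profile_covariance_max (d n : ℕ) (hd : 1 ≤ d) (hn : 1 ≤ n)
    (A : Matrix (Fin d) (Fin d) ℝ) (hA : A.PosDef) :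
    (∀ S : Matrix (Fin d) (Fin d) ℝ, S.PosDef →
      S.det ^ (-(n : ℝ) / 2) * Real.exp (-(1 / 2) * (S⁻¹ * A).trace) ≤
        (n : ℝ) ^ ((n : ℝ) * d / 2) * A.det ^ (-(n : ℝ) / 2) *
          Real.exp (-((n : ℝ) * d) / 2) ∧
      (S.det ^ (-(n : ℝ) / 2) * Real.exp (-(1 / 2) * (S⁻¹ * A).trace) =
        (n : ℝ) ^ ((n : ℝ) * d / 2) * A.det ^ (-(n : ℝ) / 2) *
          Real.exp (-((n : ℝ) * d) / 2) ↔ S = (n : ℝ)⁻¹ • A)) ∧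
    IsGreatest
      ((fun S : Matrix (Fin d) (Fin d) ℝ =>
          S.det ^ (-(n : ℝ) / 2) * Real.exp (-(1 / 2) * (S⁻¹ * A).trace)) ''
        {S | S.PosDef})
      ((n : ℝ) ^ ((n : ℝ) * d / 2) * A.det ^ (-(n : ℝ) / 2) *
        Real.exp (-((n : ℝ) * d) / 2)) := by
  have hn0 : (0:ℝ) < n := by exact_mod_cast hn
  have hAd : 0 < A.det := hA.det_pos
  have main : ∀ S : Matrix (Fin d) (Fin d) ℝ, S.PosDef →
      (S.det ^ (-(n : ℝ) / 2) * Real.exp (-(1 / 2) * (S⁻¹ * A).trace) ≤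
        (n : ℝ) ^ ((n : ℝ) * d / 2) * A.det ^ (-(n : ℝ) / 2) *
          Real.exp (-((n : ℝ) * d) / 2) ∧
      (S.det ^ (-(n : ℝ) / 2) * Real.exp (-(1 / 2) * (S⁻¹ * A).trace) =
        (n : ℝ) ^ ((n : ℝ) * d / 2) * A.det ^ (-(n : ℝ) / 2) *
          Real.exp (-((n : ℝ) * d) / 2) ↔ S = (n : ℝ)⁻¹ • A)) := by
    intro S hS
    have hSd : 0 < S.det := hS.det_pos
    have hSu : IsUnit S.det := isUnit_iff_ne_zero.mpr hSd.ne'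
    open scoped MatrixOrder in
    set Q := CFC.sqrt A with hQdef
    have hQQ : Q * Q = A := by
      open scoped MatrixOrder in exact CFC.sqrt_mul_sqrt_self A hA.posSemidef.nonneg
    have hQH : Qᴴ = Q := by
      open scoped MatrixOrder in exact (CFC.sqrt_nonneg A).posSemidef.1
    have hQdet : Q.det * Q.det = A.det := by rw [← Matrix.det_mul, hQQ]
    have hQne : Q.det ≠ 0 := by
      intro h; rw [h, mul_zero] at hQdet; exact hAd.ne' hQdet.symm
    have hQu : IsUnit Q.det := isUnit_iff_ne_zero.mpr hQne
    set B := Q * S⁻¹ * Q with hBdef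
    have hBsd : B.PosSemidef := by
      have h := hS.inv.posSemidef.mul_mul_conjTranspose_same Q
      rwa [hQH] at h
    have hdetB : B.det = A.det / S.det := by
      rw [hBdef, Matrix.det_mul, Matrix.det_mul, Matrix.det_nonsing_inv,
        Ring.inverse_eq_inv']
      field_simp
      linarith [hQdet]
    have hdetBpos : 0 < B.det := by rw [hdetB]; positivity
    have htrB : B.trace = (S⁻¹ * A).trace := by
      rw [hBdef, Matrix.trace_mul_cycle, hQQ, Matrix.trace_mul_comm]
    have key := matrix_log_ineq d n hn hBsd hdetBpos
    have hlogB : Real.log B.det = Real.log A.det - Real.log S.det := by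
      rw [hdetB, Real.log_div hAd.ne' hSd.ne']
    -- the B = n•1 ↔ S = n⁻¹ • A equivalence
    have hBiff : B = (n:ℝ) • 1 ↔ S = (n:ℝ)⁻¹ • A := by
      constructor
      · intro hB1
        have hninv : ((n:ℝ) • (1:Matrix (Fin d) (Fin d) ℝ))⁻¹ = (n:ℝ)⁻¹ • 1 := by
          apply Matrix.inv_eq_right_inv
          rw [Matrix.smul_mul, Matrix.mul_smul, Matrix.mul_one, smul_smul,
            mul_inv_cancel₀ hn0.ne', one_smul]
        have hBinv : B⁻¹ = Q⁻¹ * S * Q⁻¹ := by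
          rw [hBdef, Matrix.mul_inv_rev, Matrix.mul_inv_rev,
            Matrix.nonsing_inv_nonsing_inv S hSu, ← Matrix.mul_assoc]
        have h2 : Q⁻¹ * S * Q⁻¹ = (n:ℝ)⁻¹ • 1 := by
          rw [← hBinv, hB1, hninv]
        calc S = (Q * Q⁻¹) * S * (Q⁻¹ * Q) := by
              rw [Matrix.mul_nonsing_inv _ hQu, Matrix.nonsing_inv_mul _ hQu,
                Matrix.one_mul, Matrix.mul_one]
          _ = Q * (Q⁻¹ * S * Q⁻¹) * Q := by simp only [Matrix.mul_assoc]
          _ = Q * ((n:ℝ)⁻¹ • 1) * Q := by rw [h2]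
          _ = (n:ℝ)⁻¹ • A := by
              rw [Matrix.mul_smul, Matrix.mul_one, Matrix.smul_mul, hQQ]
      · intro hS1
        have hSinveq : S⁻¹ = (n:ℝ) • A⁻¹ := by
          rw [hS1]
          apply Matrix.inv_eq_right_inv
          rw [Matrix.smul_mul, Matrix.mul_smul, Matrix.mul_nonsing_inv _ (isUnit_iff_ne_zero.mpr hAd.ne'),
            smul_smul, inv_mul_cancel₀ hn0.ne', one_smul]
        have hQAQ : Q * A⁻¹ * Q = 1 := by
          rw [← hQQ, Matrix.mul_inv_rev, ← Matrix.mul_assoc,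
            Matrix.mul_nonsing_inv _ hQu, Matrix.one_mul, Matrix.nonsing_inv_mul _ hQu]
        rw [hBdef, hSinveq, Matrix.mul_smul, Matrix.smul_mul, hQAQ]
    -- rewrite both sides as exponentials
    have hSpow : S.det ^ (-(n:ℝ)/2) = Real.exp (Real.log S.det * (-(n:ℝ)/2)) :=
      Real.rpow_def_of_pos hSd _
    have hApow : A.det ^ (-(n:ℝ)/2) = Real.exp (Real.log A.det * (-(n:ℝ)/2)) :=
      Real.rpow_def_of_pos hAd _
    have hnpow : (n:ℝ) ^ ((n:ℝ)*d/2) = Real.exp (Real.log n * ((n:ℝ)*d/2)) :=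
      Real.rpow_def_of_pos hn0 _
    rw [hSpow, hApow, hnpow, ← Real.exp_add, ← Real.exp_add, ← Real.exp_add,
      Real.exp_le_exp, Real.exp_eq_exp]
    have bridge : (Real.log S.det * (-(n:ℝ)/2) + (-(1/2) * (S⁻¹ * A).trace))
        - (Real.log n * ((n:ℝ)*d/2) + Real.log A.det * (-(n:ℝ)/2) + (-((n:ℝ)*d)/2))
        = ((n:ℝ)/2 * Real.log B.det - B.trace/2)
          - (d:ℝ) * ((n:ℝ)/2 * Real.log n - (n:ℝ)/2) := by
      rw [hlogB, htrB]; ring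
    constructor
    · linarith [key.1, bridge]
    · rw [← hBiff, ← key.2]
      constructor
      · intro h; linarith [bridge]
      · intro h; linarith [bridge]
  refine ⟨main, ?_, ?_⟩
  · have hS0 : ((n:ℝ)⁻¹ • A).PosDef := posDef_smul' hA (by positivity)
    exact ⟨(n:ℝ)⁻¹ • A, hS0, (main _ hS0).2.mpr rfl⟩
  · rintro x ⟨S, hS, rfl⟩
    exact (main S hS).1
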